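/- Let g be a 2n-dimensional real nilpotent Lie algebra with a complex structure J. Suppose there exists a subspace W ⊆ g_k for some k > 1 with dim W = n and W ∩ J(W) = {0}. If g_{k-1} is J-invariant (J(g_{k-1}) = g_{k-1}), then g_k = g. -/
import Mathlib


/-- The ascending central series of a Lie algebra:
`acs g 0 = 0`, `acs g (k+1) = {X | [X,g] ⊆ acs g k}`. -/
def acs (g : Type*) [LieRing g] [LieAlgebra ℝ g] : ℕ → Submodule ℝ g
  | 0 => ⊥
  | k + 1 =>
    { carrier := {X : g | ∀ Y : g, ⁅X, Y⁆ ∈ acs g k}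
      zero_mem' := by intro Y; simp
      add_mem' := by
        intro a b ha hb Y
        rw [add_lie]; exact (acs g k).add_mem (ha Y) (hb Y)
      smul_mem' := by
        intro c x hx Y
        rw [smul_lie]; exact (acs g k).smul_mem c (hx Y) }

lemma mem_acs_succ {g : Type*} [LieRing g] [LieAlgebra ℝ g] (m : ℕ) (X : g) :
    X ∈ acs g (m + 1) ↔ ∀ Y : g, ⁅X, Y⁆ ∈ acs g m := Iff.rfl

/-- if `W ⊆ g_k` with `k > 1`, `dim W = n`, `W ∩ J(W) = 0`, and
`g_{k-1}` is `J`-invariant, then `g_k = g`. -/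
theorem acs_eq_top_of_J_invariant_pred (g : Type*) [LieRing g] [LieAlgebra ℝ g]
    [FiniteDimensional ℝ g] (n : ℕ) (hdim : Module.finrank ℝ g = 2 * n)
    (hnil : ∃ s : ℕ, acs g s = ⊤)
    (J : g →ₗ[ℝ] g) (hJ2 : ∀ X : g, J (J X) = -X)
    (hN : ∀ X Y : g, ⁅X, Y⁆ + J ⁅J X, Y⁆ + J ⁅X, J Y⁆ - ⁅J X, J Y⁆ = 0)
    (k : ℕ) (hk : 1 < k)
    (W : Submodule ℝ g) (hW : W ≤ acs g k)
    (hWdim : Module.finrank ℝ W = n) (hWJ : W ⊓ W.map J = ⊥)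
    (hinv : (acs g (k - 1)).map J = acs g (k - 1)) :
    acs g k = ⊤ := by
  obtain ⟨m, rfl⟩ : ∃ m, k = m + 1 := ⟨k - 1, (Nat.succ_pred_eq_of_pos (by omega)).symm⟩
  simp only [Nat.add_sub_cancel] at hinv
  -- J as a linear equivalence
  let e : g ≃ₗ[ℝ] g := LinearEquiv.ofLinear J (-J)
    (by ext x; simp [hJ2]) (by ext x; simp [hJ2])
  have hJmem : ∀ z : g, z ∈ acs g m → J z ∈ acs g m := by
    intro z hz
    rw [← hinv]
    exact Submodule.mem_map_of_mem hz
  have hmap : Module.finrank ℝ (W.map J) = n := by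
    have : W.map J = W.map (e : g →ₗ[ℝ] g) := rfl
    rw [this, LinearEquiv.finrank_map_eq]
    exact hWdim
  -- the sup is everything
  have htop : W ⊔ W.map J = ⊤ := by
    apply Submodule.eq_top_of_finrank_eq
    have h := Submodule.finrank_sup_add_finrank_inf_eq W (W.map J)
    rw [hWJ, finrank_bot, add_zero, hWdim, hmap] at h
    rw [h, hdim]
    ring
  -- J(W) ⊆ acs g (m+1)
  have hJW : W.map J ≤ acs g (m + 1) := by
    rintro _ ⟨x, hx, rfl⟩
    rw [mem_acs_succ]
    intro Y
    have hY : Y ∈ W ⊔ W.map J := htop ▸ Submodule.mem_top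
    obtain ⟨a, ha, b, hb, rfl⟩ := Submodule.mem_sup.mp hY
    rw [lie_add]
    apply (acs g m).add_mem
    · -- a ∈ W ⊆ acs g (m+1), so ⁅J x, a⁆ = -⁅a, J x⁆ ∈ acs g m
      have : ⁅J x, a⁆ = -⁅a, J x⁆ := by rw [lie_skew]
      rw [this]
      exact (acs g m).neg_mem ((mem_acs_succ m a).mp (hW ha) (J x))
    · obtain ⟨y, hy, rfl⟩ := hb
      have hxk := (mem_acs_succ m x).mp (hW hx)
      have hyk := (mem_acs_succ m y).mp (hW hy)
      have key : ⁅J x, J y⁆ = ⁅x, y⁆ + J ⁅J x, y⁆ + J ⁅x, J y⁆ :=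
        (sub_eq_zero.mp (hN x y)).symm
      rw [key]
      apply (acs g m).add_mem
      apply (acs g m).add_mem
      · exact hxk y
      · have : ⁅J x, y⁆ = -⁅y, J x⁆ := by rw [lie_skew]
        rw [this, map_neg]
        exact (acs g m).neg_mem (hJmem _ (hyk (J x)))
      · exact hJmem _ (hxk (J y))
  -- conclude
  rw [eq_top_iff, ← htop]
  exact sup_le hW hJW
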